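/- Let ω ∈ ℂ be a primitive third root of unity. Let V be a 4-dimensional ℂ-vector space and let f be an endomorphism of V whose matrix in some basis of V is diag(J(ω,3), J(1,1)). Then there is a basis of the 6-dimensional space ⋀²V in which the induced endomorphism ⋀²f has matrix diag(J(ω,3), J(ω⁻¹,3)). -/

import Mathlib

/-- The `n × n` Jordan block with eigenvalue `lam`: every diagonal entry is `lam` and every
entry directly above the diagonal is `1`. -/
def jordanBlock (lam : ℂ) (n : ℕ) : Matrix (Fin n) (Fin n) ℂ :=
  Matrix.of fun i j : Fin n =>
    if (j : ℕ) = (i : ℕ) then lam else if (j : ℕ) = (i : ℕ) + 1 then 1 else 0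

/-- The wedge `v ∧ w` as an element of the second exterior power `⋀[ℂ]^2 V`. -/
def wedge {V : Type*} [AddCommGroup V] [Module ℂ V] (v w : V) : ⋀[ℂ]^2 V :=
  ⟨ExteriorAlgebra.ι ℂ v * ExteriorAlgebra.ι ℂ w, by
    show _ ∈ LinearMap.range (ExteriorAlgebra.ι ℂ (M := V)) ^ 2
    rw [pow_two]
    exact Submodule.mul_mem_mul (LinearMap.mem_range_self _ v) (LinearMap.mem_range_self _ w)⟩

section Aux
variable {V : Type*} [AddCommGroup V] [Module ℂ V]

@[simp] lemma wedge_coe (v w : V) :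
    (wedge v w : ExteriorAlgebra ℂ V) = ExteriorAlgebra.ι ℂ v * ExteriorAlgebra.ι ℂ w := rfl

lemma wedge_add_left (u u' v : V) : wedge (u + u') v = wedge u v + wedge u' v := by
  apply Subtype.ext; simp [add_mul]

lemma wedge_add_right (u v v' : V) : wedge u (v + v') = wedge u v + wedge u v' := by
  apply Subtype.ext; simp [mul_add]

lemma wedge_smul_left (a : ℂ) (u v : V) : wedge (a • u) v = a • wedge u v := by
  apply Subtype.ext; simp [smul_mul_assoc]

lemma wedge_smul_right (a : ℂ) (u v : V) : wedge u (a • v) = a • wedge u v := by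
  apply Subtype.ext; simp [mul_smul_comm]

@[simp] lemma wedge_self (v : V) : wedge v v = 0 := by
  apply Subtype.ext; simp [ExteriorAlgebra.ι_sq_zero]

lemma wedge_antisymm (u v : V) : wedge u v = - wedge v u := by
  apply Subtype.ext
  have := ExteriorAlgebra.ι_add_mul_swap (R := ℂ) u v
  simp only [wedge_coe, Submodule.coe_neg]
  rw [eq_neg_iff_add_eq_zero]
  exact this

/-- wedge as a bilinear map -/
noncomputable def wedgeBil : V →ₗ[ℂ] V →ₗ[ℂ] ⋀[ℂ]^2 V :=
  LinearMap.mk₂ ℂ wedge wedge_add_left wedge_smul_left wedge_add_right wedge_smul_right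

/-- coordinate alternating 2-form -/
noncomputable def altF {I : Type*} (B : Module.Basis I ℂ V) [DecidableEq I] (a b : I) :
    V [⋀^Fin 2]→ₗ[ℂ] ℂ :=
  (Matrix.detRowAlternating (R := ℂ) (n := Fin 2)).compLinearMap
    (LinearMap.pi ![B.coord a, B.coord b])

lemma altF_apply {I : Type*} (B : Module.Basis I ℂ V) [DecidableEq I] (a b : I) (v w : V) :
    altF B a b ![v, w] = B.coord a v * B.coord b w - B.coord b v * B.coord a w := by
  have h : altF B a b ![v, w]
      = Matrix.det (Matrix.of fun i j => (![B.coord a, B.coord b] j) (![v, w] i)) := rfl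
  rw [h, Matrix.det_fin_two]
  simp [Module.Basis.coord_apply]

noncomputable def phiFam {I : Type*} (B : Module.Basis I ℂ V) [DecidableEq I] (a b : I) :
    ∀ n : ℕ, V [⋀^Fin n]→ₗ[ℂ] ℂ
  | 2 => altF B a b
  | _ => 0

noncomputable def phi {I : Type*} (B : Module.Basis I ℂ V) [DecidableEq I] (a b : I) :
    (⋀[ℂ]^2 V) →ₗ[ℂ] ℂ :=
  (ExteriorAlgebra.liftAlternating (phiFam B a b)).comp (Submodule.subtype _)

lemma phi_wedge {I : Type*} (B : Module.Basis I ℂ V) [DecidableEq I] (a b : I) (v w : V) :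
    phi B a b (wedge v w) = B.coord a v * B.coord b w - B.coord b v * B.coord a w := by
  have h : phi B a b (wedge v w)
      = ExteriorAlgebra.liftAlternating (phiFam B a b)
          (ExteriorAlgebra.ι ℂ v * ExteriorAlgebra.ι ℂ w) := rfl
  rw [h, ExteriorAlgebra.liftAlternating_ι_mul, ExteriorAlgebra.liftAlternating_ι,
    AlternatingMap.curryLeft_apply_apply]
  have h2 : (phiFam B a b 2) (Matrix.vecCons v ![w]) = altF B a b ![v, w] := rfl
  rw [h2, altF_apply]

lemma phi_wedge_basis {I : Type*} (B : Module.Basis I ℂ V) [DecidableEq I] (a b x y : I) :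
    phi B a b (wedge (B x) (B y)) =
      (if x = a then (1:ℂ) else 0) * (if y = b then 1 else 0)
        - (if x = b then (1:ℂ) else 0) * (if y = a then 1 else 0) := by
  rw [phi_wedge]
  simp [Module.Basis.coord_apply, Finsupp.single_apply]

lemma wedge_expand {I : Type*} [Fintype I] (B : Module.Basis I ℂ V) (u v : V) :
    wedge u v = ∑ i, ∑ j, (B.repr u i * B.repr v j) • wedge (B i) (B j) := by
  have h : wedge u v = wedgeBil (∑ i, B.repr u i • B i) (∑ j, B.repr v j • B j) := by
    rw [B.sum_repr, B.sum_repr]; rfl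
  rw [h]
  simp only [map_sum, LinearMap.sum_apply, map_smul, LinearMap.smul_apply, Finset.smul_sum,
    smul_smul]
  rw [Finset.sum_comm]
  refine Finset.sum_congr rfl fun i _ => Finset.sum_congr rfl fun j _ => ?_
  rw [mul_comm]
  rfl

/-- the candidate basis family of the exterior square -/
noncomputable def Wfam (B : Module.Basis (Fin 3 ⊕ Fin 1) ℂ V) (ω : ℂ) :
    Fin 3 ⊕ Fin 3 → ⋀[ℂ]^2 V :=
  Sum.elim
    ![wedge (B (.inl 0)) (B (.inr 0)), wedge (B (.inl 1)) (B (.inr 0)),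
      wedge (B (.inl 2)) (B (.inr 0))]
    ![wedge (B (.inl 0)) (B (.inl 1)), ω ^ 2 • wedge (B (.inl 0)) (B (.inl 2)),
      ω • wedge (B (.inl 1)) (B (.inl 2)) - wedge (B (.inl 0)) (B (.inl 2))]

variable (B : Module.Basis (Fin 3 ⊕ Fin 1) ℂ V) (ω : ℂ)

@[simp] lemma Wfam_inl0 : Wfam B ω (.inl 0) = wedge (B (.inl 0)) (B (.inr 0)) := rfl
@[simp] lemma Wfam_inl1 : Wfam B ω (.inl 1) = wedge (B (.inl 1)) (B (.inr 0)) := rfl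
@[simp] lemma Wfam_inl2 : Wfam B ω (.inl 2) = wedge (B (.inl 2)) (B (.inr 0)) := rfl
@[simp] lemma Wfam_inr0 : Wfam B ω (.inr 0) = wedge (B (.inl 0)) (B (.inl 1)) := rfl
@[simp] lemma Wfam_inr1 : Wfam B ω (.inr 1) = ω ^ 2 • wedge (B (.inl 0)) (B (.inl 2)) := rfl
@[simp] lemma Wfam_inr2 :
    Wfam B ω (.inr 2) = ω • wedge (B (.inl 1)) (B (.inl 2)) - wedge (B (.inl 0)) (B (.inl 2)) :=
  rfl

end Aux

set_option maxHeartbeats 2000000 in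
/-- Let `ω ∈ ℂ` be a primitive third root of unity. If the matrix of the endomorphism `f` of the 4-dimensional ℂ-vector space `V` in some basis is diag(J(ω,3), J(1,1)), then in some basis of the 6-dimensional space ⋀²V the induced endomorphism ⋀²f (characterized by `v ∧ w ↦ f v ∧ f w`) has matrix diag(J(ω,3), J(ω⁻¹,3)). -/
theorem exterior_square_jordan_Jw3_J1 (V : Type*) [AddCommGroup V] [Module ℂ V]
    (hdim : Module.finrank ℂ V = 4)
    (ω : ℂ) (hω : IsPrimitiveRoot ω 3)
    (f : V →ₗ[ℂ] V)
    (B : Module.Basis (Fin 3 ⊕ Fin 1) ℂ V)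
    (hB : LinearMap.toMatrix B B f = Matrix.fromBlocks (jordanBlock ω 3) 0 0 (jordanBlock 1 1))
    (g : (⋀[ℂ]^2 V) →ₗ[ℂ] (⋀[ℂ]^2 V))
    (hg : ∀ v w : V, g (wedge v w) = wedge (f v) (f w)) :
    ∃ C : Module.Basis (Fin 3 ⊕ Fin 3) ℂ (⋀[ℂ]^2 V),
      LinearMap.toMatrix C C g = Matrix.fromBlocks (jordanBlock ω 3) 0 0 (jordanBlock ω⁻¹ 3) := by
  -- root of unity facts
  have h3 : ω ^ 3 = 1 := hω.pow_eq_one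
  have h0 : ω ≠ 0 := by intro h; rw [h] at h3; norm_num at h3
  have hinv : ω⁻¹ = ω ^ 2 := by field_simp; linear_combination -h3
  -- values of f on the basis
  have hf : ∀ j, f (B j) =
      ∑ i, (Matrix.fromBlocks (jordanBlock ω 3) 0 0 (jordanBlock 1 1)) i j • B i := by
    intro j
    rw [← hB, ← Matrix.toLin_toMatrix B B f, Matrix.toLin_self, Matrix.toLin_toMatrix]
  have fe0 : f (B (.inl 0)) = ω • B (.inl 0) := by
    rw [hf, Fintype.sum_sum_type]; simp [Fin.sum_univ_three, jordanBlock, Matrix.one_apply]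
  have fe1 : f (B (.inl 1)) = B (.inl 0) + ω • B (.inl 1) := by
    rw [hf, Fintype.sum_sum_type]; simp [Fin.sum_univ_three, jordanBlock, Matrix.one_apply]
  have fe2 : f (B (.inl 2)) = B (.inl 1) + ω • B (.inl 2) := by
    rw [hf, Fintype.sum_sum_type]; simp [Fin.sum_univ_three, jordanBlock, Matrix.one_apply]
  have fe3 : f (B (.inr 0)) = B (.inr 0) := by
    rw [hf, Fintype.sum_sum_type]; simp [Fin.sum_univ_three, jordanBlock, Matrix.one_apply]
  -- the candidate family
  set W : Fin 3 ⊕ Fin 3 → ⋀[ℂ]^2 V := Wfam B ω with hW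
  -- values of g on the family
  have hg0 : g (W (.inl 0)) = ω • W (.inl 0) := by
    rw [hW, Wfam_inl0, hg, fe0, fe3, wedge_smul_left]
  have hg1 : g (W (.inl 1)) = W (.inl 0) + ω • W (.inl 1) := by
    rw [hW, Wfam_inl1, Wfam_inl0, hg, fe1, fe3, wedge_add_left, wedge_smul_left]
  have hg2 : g (W (.inl 2)) = W (.inl 1) + ω • W (.inl 2) := by
    rw [hW, Wfam_inl2, Wfam_inl1, hg, fe2, fe3, wedge_add_left, wedge_smul_left]
  have hg3 : g (W (.inr 0)) = ω ^ 2 • W (.inr 0) := by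
    rw [hW, Wfam_inr0, hg, fe0, fe1]
    simp only [wedge_smul_left, wedge_add_right, wedge_smul_right, wedge_self, smul_smul,
      smul_zero, zero_add]
    match_scalars
    ring
  have hg4 : g (W (.inr 1)) = W (.inr 0) + ω ^ 2 • W (.inr 1) := by
    rw [hW, Wfam_inr1, Wfam_inr0, map_smul, hg, fe0, fe2]
    simp only [wedge_smul_left, wedge_add_right, wedge_smul_right, wedge_self, smul_smul,
      smul_zero, zero_add, smul_add]
    match_scalars <;> first | ring1 | linear_combination -h3 | linear_combination h3
  have hg5 : g (W (.inr 2)) = W (.inr 1) + ω ^ 2 • W (.inr 2) := by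
    rw [hW, Wfam_inr2, Wfam_inr1, map_sub, map_smul, hg, hg, fe0, fe1, fe2]
    simp only [wedge_smul_left, wedge_add_left, wedge_add_right, wedge_smul_right, wedge_self,
      smul_smul, smul_zero, zero_add, add_zero, smul_add, smul_sub]
    match_scalars <;> first | ring1 | linear_combination -h3 | linear_combination h3
  -- linear independence
  have hli : LinearIndependent ℂ W := by
    refine Fintype.linearIndependent_iff.mpr fun c hc => ?_
    have key : ∀ a b, ∑ k, c k * phi B a b (W k) = 0 := by
      intro a b
      have h := congrArg (phi B a b) hc
      rw [map_sum, map_zero] at h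
      simpa [smul_eq_mul] using h
    have E0 := key (.inl 0) (.inr 0)
    have E1 := key (.inl 1) (.inr 0)
    have E2 := key (.inl 2) (.inr 0)
    have E01 := key (.inl 0) (.inl 1)
    have E02 := key (.inl 0) (.inl 2)
    have E12 := key (.inl 1) (.inl 2)
    simp only [hW, Fintype.sum_sum_type, Fin.sum_univ_three, Wfam_inl0, Wfam_inl1, Wfam_inl2,
      Wfam_inr0, Wfam_inr1, Wfam_inr2, map_smul, map_sub, phi_wedge_basis, smul_eq_mul,
      Sum.inl.injEq, Sum.inr.injEq, reduceCtorEq, Fin.reduceEq, if_true, if_false, ite_true,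
      ite_false, reduceIte, mul_zero, mul_one, zero_mul, one_mul, sub_zero, zero_sub, add_zero,
      zero_add, mul_neg, neg_zero] at E0 E1 E2 E01 E02 E12
    have hc2 : c (.inr 2) = 0 := (mul_eq_zero.mp E12).resolve_right h0
    have hc1 : c (.inr 1) = 0 := by
      have h' : c (.inr 1) * ω ^ 2 = 0 := by linear_combination E02 + hc2
      exact (mul_eq_zero.mp h').resolve_right (pow_ne_zero 2 h0)
    rintro (k | k) <;> fin_cases k
    · exact E0
    · exact E1
    · exact E2
    · exact E01
    · exact hc1
    · exact hc2
  -- spanning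
  have hWmem : ∀ k, W k ∈ Submodule.span ℂ (Set.range W) := fun k => Submodule.subset_span ⟨k, rfl⟩
  have m01 : wedge (B (.inl 0)) (B (.inl 1)) ∈ Submodule.span ℂ (Set.range W) := hWmem (.inr 0)
  have m02 : wedge (B (.inl 0)) (B (.inl 2)) ∈ Submodule.span ℂ (Set.range W) := by
    have h1 : wedge (B (.inl 0)) (B (.inl 2)) = ω • W (.inr 1) := by
      rw [hW, Wfam_inr1, smul_smul, show ω * ω ^ 2 = 1 by linear_combination h3, one_smul]
    rw [h1]; exact Submodule.smul_mem _ _ (hWmem _)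
  have m12 : wedge (B (.inl 1)) (B (.inl 2)) ∈ Submodule.span ℂ (Set.range W) := by
    have h1 : wedge (B (.inl 1)) (B (.inl 2)) = W (.inr 1) + ω ^ 2 • W (.inr 2) := by
      rw [hW, Wfam_inr1, Wfam_inr2]
      match_scalars <;> first | ring1 | linear_combination -h3 | linear_combination h3
    rw [h1]; exact Submodule.add_mem _ (hWmem _) (Submodule.smul_mem _ _ (hWmem _))
  have mi3 : ∀ i : Fin 3, wedge (B (.inl i)) (B (.inr 0)) ∈ Submodule.span ℂ (Set.range W) := by
    intro i; fin_cases i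
    exacts [hWmem (.inl 0), hWmem (.inl 1), hWmem (.inl 2)]
  have hbmem : ∀ i j, wedge (B i) (B j) ∈ Submodule.span ℂ (Set.range W) := by
    intro i j
    rcases i with i | i <;> rcases j with j | j
    · fin_cases i <;> fin_cases j
      · rw [wedge_self]; exact Submodule.zero_mem _
      · exact m01
      · exact m02
      · rw [wedge_antisymm]; exact Submodule.neg_mem _ m01
      · rw [wedge_self]; exact Submodule.zero_mem _
      · exact m12
      · rw [wedge_antisymm]; exact Submodule.neg_mem _ m02
      · rw [wedge_antisymm]; exact Submodule.neg_mem _ m12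
      · rw [wedge_self]; exact Submodule.zero_mem _
    · fin_cases j; exact mi3 i
    · fin_cases i; rw [wedge_antisymm]; exact Submodule.neg_mem _ (mi3 j)
    · fin_cases i <;> fin_cases j
      rw [wedge_self]; exact Submodule.zero_mem _
  have hwmem : ∀ u v : V, wedge u v ∈ Submodule.span ℂ (Set.range W) := by
    intro u v
    rw [wedge_expand B u v]
    exact Submodule.sum_mem _ fun i _ => Submodule.sum_mem _ fun j _ =>
      Submodule.smul_mem _ _ (hbmem i j)
  have hspan : ⊤ ≤ Submodule.span ℂ (Set.range W) := by
    intro x _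
    have hsub : (⋀[ℂ]^2 V : Submodule ℂ (ExteriorAlgebra ℂ V)) ≤
        (Submodule.span ℂ (Set.range W)).map (Submodule.subtype _) := by
      refine le_of_eq_of_le (ExteriorAlgebra.ιMulti_span_fixedDegree ℂ 2).symm ?_
      rw [Submodule.span_le]
      rintro _ ⟨v, rfl⟩
      have hv : ExteriorAlgebra.ιMulti ℂ 2 v
          = ((wedge (v 0) (v 1) : ⋀[ℂ]^2 V) : ExteriorAlgebra ℂ V) := by
        simp [ExteriorAlgebra.ιMulti_apply, List.ofFn_succ, Matrix.vecTail]
      rw [hv]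
      exact Submodule.mem_map_of_mem (hwmem _ _)
    obtain ⟨y, hy, hyx⟩ := hsub x.2
    rwa [show y = x from Subtype.ext hyx] at hy
  -- the basis
  refine ⟨Module.Basis.mk hli hspan, ?_⟩
  have hCW : ∀ k, (Module.Basis.mk hli hspan) k = W k := fun k => by rw [Module.Basis.mk_apply]
  ext x y
  rw [LinearMap.toMatrix_apply]
  rcases y with y | y <;> fin_cases y
  · rw [show ((⟨0, by norm_num⟩ : Fin 3) : Fin 3) = 0 from rfl, hCW, hg0, ← hCW (.inl 0),
      map_smul, Module.Basis.repr_self]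
    rcases x with x | x <;> fin_cases x <;>
      simp [Finsupp.single_apply, Finsupp.add_apply, Finsupp.smul_apply, smul_eq_mul,
        jordanBlock, Matrix.fromBlocks_apply₁₁, Matrix.fromBlocks_apply₁₂,
        Matrix.fromBlocks_apply₂₁, Matrix.fromBlocks_apply₂₂, hinv]
  · rw [show ((⟨1, by norm_num⟩ : Fin 3) : Fin 3) = 1 from rfl, hCW, hg1, ← hCW (.inl 0),
      ← hCW (.inl 1), map_add, map_smul, Module.Basis.repr_self, Module.Basis.repr_self]
    rcases x with x | x <;> fin_cases x <;>
      simp [Finsupp.single_apply, Finsupp.add_apply, Finsupp.smul_apply, smul_eq_mul,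
        jordanBlock, Matrix.fromBlocks_apply₁₁, Matrix.fromBlocks_apply₁₂,
        Matrix.fromBlocks_apply₂₁, Matrix.fromBlocks_apply₂₂, hinv]
  · rw [show ((⟨2, by norm_num⟩ : Fin 3) : Fin 3) = 2 from rfl, hCW, hg2, ← hCW (.inl 1),
      ← hCW (.inl 2), map_add, map_smul, Module.Basis.repr_self, Module.Basis.repr_self]
    rcases x with x | x <;> fin_cases x <;>
      simp [Finsupp.single_apply, Finsupp.add_apply, Finsupp.smul_apply, smul_eq_mul,
        jordanBlock, Matrix.fromBlocks_apply₁₁, Matrix.fromBlocks_apply₁₂,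
        Matrix.fromBlocks_apply₂₁, Matrix.fromBlocks_apply₂₂, hinv]
  · rw [show ((⟨0, by norm_num⟩ : Fin 3) : Fin 3) = 0 from rfl, hCW, hg3, ← hCW (.inr 0),
      map_smul, Module.Basis.repr_self]
    rcases x with x | x <;> fin_cases x <;>
      simp [Finsupp.single_apply, Finsupp.add_apply, Finsupp.smul_apply, smul_eq_mul,
        jordanBlock, Matrix.fromBlocks_apply₁₁, Matrix.fromBlocks_apply₁₂,
        Matrix.fromBlocks_apply₂₁, Matrix.fromBlocks_apply₂₂, hinv]
  · rw [show ((⟨1, by norm_num⟩ : Fin 3) : Fin 3) = 1 from rfl, hCW, hg4, ← hCW (.inr 0),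
      ← hCW (.inr 1), map_add, map_smul, Module.Basis.repr_self, Module.Basis.repr_self]
    rcases x with x | x <;> fin_cases x <;>
      simp [Finsupp.single_apply, Finsupp.add_apply, Finsupp.smul_apply, smul_eq_mul,
        jordanBlock, Matrix.fromBlocks_apply₁₁, Matrix.fromBlocks_apply₁₂,
        Matrix.fromBlocks_apply₂₁, Matrix.fromBlocks_apply₂₂, hinv]
  · rw [show ((⟨2, by norm_num⟩ : Fin 3) : Fin 3) = 2 from rfl, hCW, hg5, ← hCW (.inr 1),
      ← hCW (.inr 2), map_add, map_smul, Module.Basis.repr_self, Module.Basis.repr_self]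
    rcases x with x | x <;> fin_cases x <;>
      simp [Finsupp.single_apply, Finsupp.add_apply, Finsupp.smul_apply, smul_eq_mul,
        jordanBlock, Matrix.fromBlocks_apply₁₁, Matrix.fromBlocks_apply₁₂,
        Matrix.fromBlocks_apply₂₁, Matrix.fromBlocks_apply₂₂, hinv]
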